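/- Let T be a finite tree on n vertices and let p be a walk in T from s to t that visits every vertex of T. Then every edge of T is traversed by p, every edge of T not lying on the unique s–t path in T is traversed at least twice by p, and consequently, for every nonnegative edge-weight function w on T, the total w-weight of p (summing w over traversals) is at least 2·∑_{e ∈ E(T)} w(e) − dist_w(s, t), where dist_w denotes the weighted tree distance. -/

import Mathlib

open Finset

open Classical in
/-- If a walk's edges never cross the cut `f`, all support vertices are on the
same side as the start. -/
private lemma cut_count_zero {V : Type} [DecidableEq V] {G : SimpleGraph V}
    (f : V → Prop) (e : Sym2 V)
    (hf : ∀ a b : V, G.Adj a b → s(a, b) ≠ e → (f a ↔ f b)) :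
    ∀ {x y : V} (q : G.Walk x y), q.edges.count e = 0 →
      ∀ z ∈ q.support, (f z ↔ f x) := by
  intro x y q
  induction q with
  | nil => intro _ z hz; simp at hz; subst hz; rfl
  | @cons a b c h q ih =>
    intro hcount z hz
    rw [SimpleGraph.Walk.edges_cons, List.count_cons] at hcount
    have h1 : q.edges.count e = 0 ∧ ¬ (s(a, b) = e) := by
      by_cases hh : s(a, b) = e <;> simp [hh] at hcount <;> simp [hh, hcount]
    have hab : f a ↔ f b := hf a b h h1.2
    rw [SimpleGraph.Walk.support_cons] at hz
    rcases List.mem_cons.mp hz with rfl | hz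
    · rfl
    · exact (ih h1.1 z hz).trans hab.symm

open Classical in
/-- Parity of the number of crossings of a cut along a walk. -/
private lemma cut_parity {V : Type} [DecidableEq V] {G : SimpleGraph V}
    (f : V → Prop) (e : Sym2 V)
    (hf : ∀ a b : V, G.Adj a b → ((f a ↔ f b) ↔ s(a, b) ≠ e)) :
    ∀ {x y : V} (q : G.Walk x y), Even (q.edges.count e) ↔ (f x ↔ f y) := by
  intro x y q
  induction q with
  | nil => simp
  | @cons a b c h q ih =>
    rw [SimpleGraph.Walk.edges_cons, List.count_cons]
    by_cases hh : s(a, b) = e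
    · have hab : ¬ (f a ↔ f b) := fun hc => (hf a b h).mp hc hh
      simp only [hh, beq_self_eq_true, if_true, Nat.even_add_one, ih]
      tauto
    · have hab : f a ↔ f b := (hf a b h).mpr hh
      have hbe : (s(a, b) == e) = false := beq_false_of_ne hh
      simp only [hbe, if_false, add_zero, ih]
      tauto

/-- Let `p` be a walk in a finite tree `T` from `s` to `t` visiting
every vertex, and let `pst` be the (unique) simple path from `s` to `t`.  Then every
edge of `T` is traversed by `p`; every edge not on `pst` is traversed at least twice;
and consequently for every nonnegative edge-weight function `w` the total weight of
`p` (summing over traversals) is at least `2·∑_e w e − dist_w(s,t)`, where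
`dist_w(s,t)` is the weight of `pst`. -/
theorem tree_spanning_walk_lower_bound {V : Type} [Fintype V] [DecidableEq V]
    (T : SimpleGraph V) (hT : T.IsTree) [DecidableRel T.Adj]
    (s t : V) (p : T.Walk s t) (hp : ∀ v : V, v ∈ p.support)
    (pst : T.Walk s t) (hpst : pst.IsPath) :
    (∀ e ∈ T.edgeSet, e ∈ p.edges) ∧
    (∀ e ∈ T.edgeSet, e ∉ pst.edges → 2 ≤ p.edges.count e) ∧
    (∀ w : Sym2 V → ℝ, (∀ e, 0 ≤ w e) →
      2 * (∑ e ∈ T.edgeFinset, w e) - (pst.edges.map w).sum ≤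
        (p.edges.map w).sum) := by
  classical
  have key : ∀ e ∈ T.edgeSet, (1 ≤ p.edges.count e) ∧
      (e ∉ pst.edges → 2 ≤ p.edges.count e) := by
    intro e he
    induction e using Sym2.ind with
    | _ u v =>
    have huv : T.Adj u v := he
    set f : V → Prop := fun x => (T \ SimpleGraph.fromEdgeSet {s(u, v)}).Reachable v x
      with hfdef
    have hfv : f v := SimpleGraph.Reachable.refl v
    have hfu : ¬ f u := by
      have hb : T.IsBridge s(u, v) :=
        (SimpleGraph.isAcyclic_iff_forall_adj_isBridge.mp hT.2) huv
      intro hr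
      exact (SimpleGraph.isBridge_iff.mp hb) hr.symm
    have hcross : ∀ a b : V, T.Adj a b → ((f a ↔ f b) ↔ s(a, b) ≠ s(u, v)) := by
      intro a b hab
      constructor
      · intro hiff heq
        rw [Sym2.eq_iff] at heq
        rcases heq with ⟨rfl, rfl⟩ | ⟨rfl, rfl⟩
        · exact hfu (hiff.mpr hfv)
        · exact hfu (hiff.mp hfv)
      · intro hne
        have hadj : (T \ SimpleGraph.fromEdgeSet {s(u, v)}).Adj a b := by
          have h' : (T.deleteEdges {s(u, v)}).Adj a b := by
            rw [SimpleGraph.deleteEdges_adj]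
            exact ⟨hab, by simpa using hne⟩
          exact h'
        exact ⟨fun hra => hra.trans hadj.reachable,
               fun hrb => hrb.trans hadj.symm.reachable⟩
    have hfne : ∀ a b : V, T.Adj a b → s(a, b) ≠ s(u, v) → (f a ↔ f b) :=
      fun a b hab hne => (hcross a b hab).mpr hne
    have hpos : 1 ≤ p.edges.count s(u, v) := by
      by_contra h0
      have h0' : p.edges.count s(u, v) = 0 := by omega
      have h1 := cut_count_zero f s(u, v) hfne p h0' u (hp u)
      have h2 := cut_count_zero f s(u, v) hfne p h0' v (hp v)
      exact hfu (h1.mpr (h2.mp hfv))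
    refine ⟨hpos, fun hmem => ?_⟩
    have h0 : pst.edges.count s(u, v) = 0 := List.count_eq_zero.mpr hmem
    have hst : f s ↔ f t :=
      (cut_count_zero f s(u, v) hfne pst h0 t pst.end_mem_support).symm
    have heven : Even (p.edges.count s(u, v)) :=
      (cut_parity f s(u, v) hcross p).mpr hst
    rcases heven with ⟨k, hk⟩
    omega
  have part1 : ∀ e ∈ T.edgeSet, e ∈ p.edges := by
    intro e he
    have := (key e he).1
    exact List.count_pos_iff.mp (by omega)
  refine ⟨part1, fun e he hmem => (key e he).2 hmem, ?_⟩
  intro w hw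
  have hsum : ∀ (l : List (Sym2 V)), (∀ e ∈ l, e ∈ T.edgeSet) →
      (l.map w).sum = ∑ e ∈ T.edgeFinset, (l.count e : ℝ) * w e := by
    intro l hl
    have hsub : l.toFinset ⊆ T.edgeFinset := fun x hx =>
      SimpleGraph.mem_edgeFinset.mpr (hl x (List.mem_toFinset.mp hx))
    rw [Finset.sum_list_map_count,
      Finset.sum_subset hsub (fun x _ hx => by
        rw [List.count_eq_zero.mpr (fun h => hx (List.mem_toFinset.mpr h))]; simp)]
    exact Finset.sum_congr rfl (fun x _ => by rw [nsmul_eq_mul])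
  have hps := hsum p.edges p.edges_subset_edgeSet
  have hpsts := hsum pst.edges pst.edges_subset_edgeSet
  rw [hps, hpsts, sub_le_iff_le_add, ← Finset.sum_add_distrib, Finset.mul_sum]
  refine Finset.sum_le_sum ?_
  intro e hee
  have he : e ∈ T.edgeSet := SimpleGraph.mem_edgeFinset.mp hee
  have h2 : 2 ≤ p.edges.count e + pst.edges.count e := by
    by_cases hmem : e ∈ pst.edges
    · have := (key e he).1
      have := List.count_pos_iff.mpr hmem
      omega
    · have := (key e he).2 hmem
      omega
  calc 2 * w e ≤ ((p.edges.count e + pst.edges.count e : ℕ) : ℝ) * w e := by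
        apply mul_le_mul_of_nonneg_right _ (hw e)
        exact_mod_cast h2
    _ = (p.edges.count e : ℝ) * w e + (pst.edges.count e : ℝ) * w e := by
        push_cast; ring
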